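/- Let δ = ±1, let a, b ∈ ℝ with a ≠ 0, let η ∈ ℝ with η ≠ 0, and let φ : ℝ → ℝ be a smooth strictly monotone function (φ′ ≠ 0 everywhere). Let u, v : U → ℝ be smooth functions on an open set U ⊆ ℝ² satisfying u_{xt} = (au + b)φ(v_x) + 1, v_{xt} = δ(a²/φ′(v_x))·u_x·(au + b) on U. Define F₁₁ = η a·u_x, F₂₁ = η², F₃₁ = −η·φ(v_x), F₁₂ = 0, F₂₂ = a²u + ab, F₃₂ = a/η. Then on U the structure equations hold: −∂_t F₁₁ + ∂_x F₁₂ = F₃₁F₂₂ − F₃₂F₂₁, −∂_t F₂₁ + ∂_x F₂₂ = F₁₁F₃₂ − F₁₂F₃₁, −∂_t F₃₁ + ∂_x F₃₂ = δ(F₁₁F₂₂ − F₁₂F₂₁); hence this system describes pseudospherical surfaces (δ = 1), resp. spherical surfaces (δ = −1), with these associated functions. -/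

import Mathlib

open Real

/-- Partial derivative in the `x` direction of a function on the `(x, t)` plane. -/
noncomputable def pdx (f : ℝ × ℝ → ℝ) (p : ℝ × ℝ) : ℝ := fderiv ℝ f p (1, 0)

/-- Partial derivative in the `t` direction of a function on the `(x, t)` plane. -/
noncomputable def pdt (f : ℝ × ℝ → ℝ) (p : ℝ × ℝ) : ℝ := fderiv ℝ f p (0, 1)

/-- The structure equations of a surface of constant Gaussian curvature `-δ`. -/
def StructEqs (δ : ℝ) (U : Set (ℝ × ℝ)) (F11 F12 F21 F22 F31 F32 : ℝ × ℝ → ℝ) : Prop :=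
  ∀ p ∈ U,
    -(pdt F11 p) + pdx F12 p = F31 p * F22 p - F32 p * F21 p ∧
    -(pdt F21 p) + pdx F22 p = F11 p * F32 p - F12 p * F31 p ∧
    -(pdt F31 p) + pdx F32 p = δ * (F11 p * F22 p - F12 p * F21 p)

/-- The system `u_xt = (au + b)φ(v_x) + 1`, `v_xt = δ(a²/φ′(v_x))u_x(au + b)`
describes pseudospherical surfaces (`δ = 1`), resp. spherical surfaces (`δ = −1`). -/
theorem system_exquatroparametros_describes_pss_ss (δ a b η : ℝ)
    (hδ : δ = 1 ∨ δ = -1) (ha : a ≠ 0) (hη : η ≠ 0)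
    (φ : ℝ → ℝ) (hφ : ContDiff ℝ (⊤ : ℕ∞) φ)
    (hφ' : ∀ s : ℝ, deriv φ s ≠ 0) (hφmono : StrictMono φ ∨ StrictAnti φ)
    (U : Set (ℝ × ℝ)) (hU : IsOpen U)
    (u v : ℝ × ℝ → ℝ)
    (hu : ContDiffOn ℝ (⊤ : ℕ∞) u U) (hv : ContDiffOn ℝ (⊤ : ℕ∞) v U)
    (heq1 : ∀ p ∈ U, pdt (pdx u) p = (a * u p + b) * φ (pdx v p) + 1)
    (heq2 : ∀ p ∈ U,
      pdt (pdx v) p = δ * (a ^ 2 / deriv φ (pdx v p)) * pdx u p * (a * u p + b)) :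
    StructEqs δ U
      (fun q => η * a * pdx u q)
      (fun _ => 0)
      (fun _ => η ^ 2)
      (fun q => a ^ 2 * u q + a * b)
      (fun q => -(η * φ (pdx v q)))
      (fun _ => a / η) := by
  intro p hp
  have hup : ContDiffAt ℝ (⊤ : ℕ∞) u p := hu.contDiffAt (hU.mem_nhds hp)
  have hvp : ContDiffAt ℝ (⊤ : ℕ∞) v p := hv.contDiffAt (hU.mem_nhds hp)
  have hux : ContDiffAt ℝ (⊤ : ℕ∞) (pdx u) p := by
    have h := (hup.fderiv_right (m := (⊤ : ℕ∞)) (by exact_mod_cast le_top)).clm_apply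
      (contDiffAt_const (c := ((1 : ℝ), (0 : ℝ))))
    exact h
  have hvx : ContDiffAt ℝ (⊤ : ℕ∞) (pdx v) p := by
    have h := (hvp.fderiv_right (m := (⊤ : ℕ∞)) (by exact_mod_cast le_top)).clm_apply
      (contDiffAt_const (c := ((1 : ℝ), (0 : ℝ))))
    exact h
  have huxd : DifferentiableAt ℝ (pdx u) p := hux.differentiableAt (by simp)
  have hvxd : DifferentiableAt ℝ (pdx v) p := hvx.differentiableAt (by simp)
  have hud : DifferentiableAt ℝ u p := hup.differentiableAt (by simp)
  have hφd : DifferentiableAt ℝ φ (pdx v p) := (hφ.differentiable (by simp)) _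
  refine ⟨?_, ?_, ?_⟩
  · have h1 : pdt (fun q => η * a * pdx u q) p = η * a * pdt (pdx u) p := by
      unfold pdt
      rw [fderiv_const_mul huxd]
      simp
    have h0 : pdx (fun _ : ℝ × ℝ => (0 : ℝ)) p = 0 := by
      unfold pdx; simp
    rw [h1, h0, heq1 p hp]
    field_simp
    ring
  · have h1 : pdt (fun _ : ℝ × ℝ => η ^ 2) p = 0 := by
      unfold pdt; simp
    have h2 : pdx (fun q => a ^ 2 * u q + a * b) p = a ^ 2 * pdx u p := by
      unfold pdx
      rw [fderiv_add_const, fderiv_const_mul hud]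
      simp
    rw [h1, h2]
    field_simp
    ring
  · have hcomp : DifferentiableAt ℝ (fun q => φ (pdx v q)) p := hφd.comp p hvxd
    have h1 : pdt (fun q => -(η * φ (pdx v q))) p
        = -(η * (deriv φ (pdx v p) * pdt (pdx v) p)) := by
      unfold pdt
      rw [fderiv_fun_neg, fderiv_const_mul hcomp]
      have hch : fderiv ℝ (fun q => φ (pdx v q)) p ((0 : ℝ), (1 : ℝ))
          = deriv φ (pdx v p) * fderiv ℝ (pdx v) p ((0 : ℝ), (1 : ℝ)) := by
        have := fderiv_comp p hφd hvxd
        rw [show (fun q => φ (pdx v q)) = φ ∘ pdx v from rfl, this]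
        simp only [ContinuousLinearMap.comp_apply]
        have hsmul : fderiv ℝ (pdx v) p ((0 : ℝ), (1 : ℝ))
            = (fderiv ℝ (pdx v) p ((0 : ℝ), (1 : ℝ))) • (1 : ℝ) := by simp
        rw [hsmul, map_smul, fderiv_apply_one_eq_deriv]
        simp [mul_comm]
      simp only [ContinuousLinearMap.neg_apply, ContinuousLinearMap.smul_apply, hch,
        smul_eq_mul]
      try ring
    have h0 : pdx (fun _ : ℝ × ℝ => a / η) p = 0 := by
      unfold pdx; simp
    rw [h1, h0, heq2 p hp]
    field_simp [hφ' (pdx v p)]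
    ring
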